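/- arXiv:0808.3751 — 4 statements merged into one kernel-verified Lean document; each statement's English description precedes it below -/
import Mathlib

section
/- Let q > 1, p = q/(q-1), and g ∈ L^p(P) with g = 1 - f for f ∈ K̄₀. For every u ∈ L^q(P) annihilating K̄₀ with E[u] = 1, one has E[u g] = 1, and consequently by Hölder's inequality ‖u‖_q ≥ 1/‖g‖_p. Hence u* = g*/E[g*] (where g* = sgn(g)|g|^{p-1}) has minimal L^q-norm among all such u. -/
open MeasureTheory ENNReal Filter

private lemma qopt_sign_mul_self (y : ℝ) : Real.sign y * y = |y| := by
  rcases lt_trichotomy y 0 with h | rfl | h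
  · rw [Real.sign_of_neg h, abs_of_neg h]; ring
  · simp
  · rw [Real.sign_of_pos h, abs_of_pos h]; ring

private lemma qopt_abs_s {p : ℝ} (hp : 1 < p) (x : ℝ) :
    |Real.sign x * |x| ^ (p - 1)| = |x| ^ (p - 1) := by
  rcases lt_trichotomy x 0 with h | rfl | h
  · rw [Real.sign_of_neg h, abs_mul]
    simp [abs_of_nonneg (Real.rpow_nonneg (abs_nonneg x) _)]
  · simp [Real.zero_rpow (ne_of_gt (by linarith : (0:ℝ) < p - 1))]
  · rw [Real.sign_of_pos h, abs_mul]
    simp [abs_of_nonneg (Real.rpow_nonneg (abs_nonneg x) _)]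

private lemma qopt_abs_s_rpow {p q : ℝ} (hp : 1 < p) (hq0 : 0 < q) (hpq : (p - 1) * q = p)
    (x : ℝ) : |Real.sign x * |x| ^ (p - 1)| ^ q = |x| ^ p := by
  rw [qopt_abs_s hp, ← Real.rpow_mul (abs_nonneg x), hpq]

private lemma qopt_s_mul_self {p : ℝ} (hp : 1 < p) (x : ℝ) :
    (Real.sign x * |x| ^ (p - 1)) * x = |x| ^ p := by
  rcases eq_or_ne x 0 with rfl | hx
  · simp [Real.zero_rpow (show p ≠ 0 by linarith)]
  · have hax : (0:ℝ) < |x| := abs_pos.2 hx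
    have h1 : (Real.sign x * |x| ^ (p - 1)) * x = |x| ^ (p - 1) * (Real.sign x * x) := by ring
    rw [h1, qopt_sign_mul_self, ← Real.rpow_add_one hax.ne' (p - 1)]
    norm_num

/-- tangent line inequality from Bernoulli -/
private lemma qopt_tangent {p : ℝ} (hp : 1 < p) (x y : ℝ) :
    |y| ^ p + p * (Real.sign y * |y| ^ (p - 1)) * (x - y) ≤ |x| ^ p := by
  have hp0 : (0:ℝ) < p := by linarith
  rcases eq_or_ne y 0 with rfl | hy
  · simpa [Real.zero_rpow hp0.ne'] using Real.rpow_nonneg (abs_nonneg x) p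
  · have hay : (0:ℝ) < |y| := abs_pos.2 hy
    have hsy : Real.sign y * y = |y| := qopt_sign_mul_self y
    set z : ℝ := Real.sign y * (x - y) / |y| with hz
    have hsum : p - 1 + 1 = p := by ring
    have habs : |y| ^ p = |y| ^ (p - 1) * |y| := by
      rw [← Real.rpow_add_one hay.ne' (p - 1), hsum]
    have hterm : p * (Real.sign y * |y| ^ (p - 1)) * (x - y) = p * z * |y| ^ p := by
      rw [hz, habs]; field_simp
    have h1z : 1 + z = Real.sign y * x / |y| := by
      rw [hz, mul_sub, hsy, sub_div, div_self hay.ne']; ring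
    have hsx : Real.sign y * x ≤ |x| := by
      rcases lt_or_gt_of_ne hy with h | h
      · rw [Real.sign_of_neg h, neg_one_mul]; exact neg_le_abs x
      · rw [Real.sign_of_pos h]; simpa using le_abs_self x
    rw [hterm]
    rcases le_or_gt 0 (1 + z) with h1 | h1
    · have hb := one_add_mul_self_le_rpow_one_add (by linarith : (-1:ℝ) ≤ z) hp.le
      have hxy : |y| * (1 + z) ≤ |x| := by
        rw [h1z, mul_comm, div_mul_cancel₀ _ hay.ne']; exact hsx
      have h2 : (|y| * (1 + z)) ^ p ≤ |x| ^ p :=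
        Real.rpow_le_rpow (by positivity) hxy hp0.le
      rw [Real.mul_rpow hay.le h1] at h2
      have h3 : |y| ^ p * (1 + p * z) ≤ |y| ^ p * (1 + z) ^ p :=
        mul_le_mul_of_nonneg_left hb (Real.rpow_nonneg hay.le p)
      nlinarith [h2, h3]
    · have hneg : 1 + p * z < 0 := by nlinarith [hp, h1]
      have hlt : |y| ^ p * (1 + p * z) < 0 :=
        mul_neg_of_pos_of_neg (Real.rpow_pos_of_pos hay p) hneg
      nlinarith [Real.rpow_nonneg (abs_nonneg x) p]

private lemma qopt_continuous_s {p : ℝ} (hp : 1 < p) :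
    Continuous (fun x : ℝ => Real.sign x * |x| ^ (p - 1)) := by
  have h0 : (0:ℝ) ≤ p - 1 := by linarith
  have hne : p - 1 ≠ 0 := ne_of_gt (by linarith)
  have heq : (fun x : ℝ => Real.sign x * |x| ^ (p - 1))
      = fun x : ℝ => (max x 0) ^ (p - 1) - (max (-x) 0) ^ (p - 1) := by
    funext x
    rcases lt_trichotomy x 0 with h | rfl | h
    · rw [Real.sign_of_neg h, max_eq_right h.le, max_eq_left (by linarith : (0:ℝ) ≤ -x),
        abs_of_neg h, Real.zero_rpow hne]
      ring
    · simp [Real.zero_rpow hne]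
    · rw [Real.sign_of_pos h, max_eq_left h.le, max_eq_right (by linarith : -x ≤ (0:ℝ)),
        abs_of_pos h, Real.zero_rpow hne]
      ring
  rw [heq]
  exact ((Real.continuous_rpow_const h0).comp (continuous_id.max continuous_const)).sub
    ((Real.continuous_rpow_const h0).comp (continuous_neg.max continuous_const))

private lemma qopt_memLp_s {Ω : Type*} [MeasurableSpace Ω] {P : Measure Ω} {p q : ℝ}
    (hp : 1 < p) (hq : 1 < q) (hpq : (p - 1) * q = p) {w : Ω → ℝ}
    (hw : MemLp w (ENNReal.ofReal p) P) :
    MemLp (fun ω => Real.sign (w ω) * |w ω| ^ (p - 1)) (ENNReal.ofReal q) P := by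
  have hq0 : (0:ℝ) < q := by linarith
  have hp0 : (0:ℝ) < p := by linarith
  constructor
  · exact (qopt_continuous_s hp).comp_aestronglyMeasurable hw.1
  · rw [eLpNorm_eq_lintegral_rpow_enorm_toReal
      (by simp [ENNReal.ofReal_eq_zero, hq0.not_ge]) ofReal_ne_top,
      toReal_ofReal hq0.le]
    have hlt := lintegral_rpow_enorm_lt_top_of_eLpNorm_lt_top
      (by simp [ENNReal.ofReal_eq_zero, hp0.not_ge] : ENNReal.ofReal p ≠ 0) ofReal_ne_top hw.2
    rw [toReal_ofReal hp0.le] at hlt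
    have heq : ∀ ω, ‖Real.sign (w ω) * |w ω| ^ (p - 1)‖ₑ ^ q
        = ‖w ω‖ₑ ^ p := by
      intro ω
      rw [← ofReal_norm, ← ofReal_norm,
        ofReal_rpow_of_nonneg (norm_nonneg _) hq0.le,
        ofReal_rpow_of_nonneg (norm_nonneg _) hp0.le]
      congr 1
      rw [Real.norm_eq_abs, Real.norm_eq_abs]
      exact qopt_abs_s_rpow hp hq0 hpq (w ω)
    rw [lintegral_congr heq]
    exact ENNReal.rpow_lt_top_of_nonneg (by positivity) hlt.ne

private lemma qopt_integrable_mul {Ω : Type*} [MeasurableSpace Ω] {P : Measure Ω}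
    {p q : ℝ} (hqp : Real.HolderConjugate q p) {v w : Ω → ℝ}
    (hv : MemLp v (ENNReal.ofReal q) P) (hw : MemLp w (ENNReal.ofReal p) P) :
    Integrable (fun ω => v ω * w ω) P := by
  have h : MemLp (v • w) 1 P := by
    haveI : ENNReal.HolderTriple (ENNReal.ofReal q) (ENNReal.ofReal p) 1 :=
      ⟨by rw [inv_one]; exact hqp.inv_add_inv_ennreal⟩
    exact hw.smul hv
  exact memLp_one_iff_integrable.mp h

private lemma qopt_norm_eq {Ω : Type*} [MeasurableSpace Ω] {P : Measure Ω} {p : ℝ}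
    (hp0 : 0 < p) [Fact (1 ≤ ENNReal.ofReal p)] (x : Lp ℝ (ENNReal.ofReal p) P) :
    ‖x‖ = (∫ ω, |x ω| ^ p ∂P) ^ (1 / p) := by
  rw [Lp.norm_def, (Lp.memLp x).eLpNorm_eq_integral_rpow_norm
      (by simp [ENNReal.ofReal_eq_zero, hp0.not_ge]) ofReal_ne_top]
  rw [toReal_ofReal]
  · simp [Real.norm_eq_abs, toReal_ofReal hp0.le, one_div]
  · exact Real.rpow_nonneg (integral_nonneg fun ω => Real.rpow_nonneg (norm_nonneg _) _) _

/-- For every signed martingale density `u ∈ L^q` one has `E[ug] = 1`, hence by Hölder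
`‖u‖_q ≥ 1/‖g‖_p`, and `u* = g*/E[g*]` has minimal `L^q`-norm among such `u`. -/
theorem qoptimal_density_minimal_norm
    {Ω : Type*} [MeasurableSpace Ω] (P : Measure Ω) [IsProbabilityMeasure P]
    (q p : ℝ) (hq : 1 < q) (hp : p = q / (q - 1))
    [Fact (1 ≤ ENNReal.ofReal p)]
    (K : Submodule ℝ (Lp ℝ (ENNReal.ofReal p) P))
    (hK : IsClosed (K : Set (Lp ℝ (ENNReal.ofReal p) P)))
    (one : Lp ℝ (ENNReal.ofReal p) P)
    (hone : one = MemLp.toLp (fun _ => (1 : ℝ)) (memLp_const 1))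
    (h1K : one ∉ K)
    (f : Lp ℝ (ENNReal.ofReal p) P) (hf : f ∈ K)
    (hmin : ∀ h ∈ K, ‖one - f‖ ≤ ‖one - h‖)
    (u : Ω → ℝ) (hu : MemLp u (ENNReal.ofReal q) P)
    (hann : ∀ h ∈ K, ∫ ω, u ω * (h : Ω → ℝ) ω ∂P = 0)
    (hu1 : ∫ ω, u ω ∂P = 1) :
    (∫ ω, u ω * (one - f : Lp ℝ (ENNReal.ofReal p) P) ω ∂P = 1) ∧
    (1 / ‖one - f‖ ≤ (∫ ω, |u ω| ^ q ∂P) ^ (1 / q)) ∧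
    ((∫ ω, |(Real.sign ((one - f : Lp ℝ (ENNReal.ofReal p) P) ω) *
          |(one - f : Lp ℝ (ENNReal.ofReal p) P) ω| ^ (p - 1)) /
        (∫ ω', Real.sign ((one - f : Lp ℝ (ENNReal.ofReal p) P) ω') *
          |(one - f : Lp ℝ (ENNReal.ofReal p) P) ω'| ^ (p - 1) ∂P)| ^ q ∂P) ^ (1 / q)
      ≤ (∫ ω, |u ω| ^ q ∂P) ^ (1 / q)) := by
  have hq0 : (0:ℝ) < q := lt_trans one_pos hq
  have hqp : Real.HolderConjugate q p := (Real.holderConjugate_iff_eq_conjExponent hq).2 hp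
  have hpq : Real.HolderConjugate p q := hqp.symm
  have hp1 : 1 < p := hpq.lt
  have hp0 : (0:ℝ) < p := hpq.pos
  have hpprod : (p - 1) * q = p := hpq.sub_one_mul_conj
  set G : Ω → ℝ := ⇑(one - f) with hGdef
  set F : Ω → ℝ := ⇑f with hFdef
  have hGmem : MemLp G (ENNReal.ofReal p) P := Lp.memLp _
  have hFmem : MemLp F (ENNReal.ofReal p) P := Lp.memLp _
  have hone1 : ⇑one =ᵐ[P] fun _ => (1:ℝ) := by rw [hone]; exact MemLp.coeFn_toLp _
  have hGae : G =ᵐ[P] fun ω => 1 - F ω := by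
    filter_upwards [Lp.coeFn_sub one f, hone1] with ω h1 h2
    simp only [hGdef, hFdef, h1, Pi.sub_apply, h2]
  -- Part 1
  have hufint : Integrable (fun ω => u ω * F ω) P := qopt_integrable_mul hqp hu hFmem
  have huint : Integrable u P := hu.integrable (ENNReal.one_le_ofReal.2 hq.le)
  have part1 : ∫ ω, u ω * G ω ∂P = 1 := by
    have heq : ∫ ω, u ω * G ω ∂P = ∫ ω, (u ω - u ω * F ω) ∂P := by
      refine integral_congr_ae ?_
      filter_upwards [hGae] with ω h
      rw [h]; ring
    rw [heq, integral_sub huint hufint, hu1, hann f hf]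
    norm_num
  -- Part 2
  have hnorm : ‖one - f‖ = (∫ ω, |G ω| ^ p ∂P) ^ (1 / p) := qopt_norm_eq hp0 (one - f)
  have hint_nonneg : 0 ≤ ∫ ω, |G ω| ^ p ∂P :=
    integral_nonneg fun ω => Real.rpow_nonneg (abs_nonneg _) _
  have hB : 0 < ‖one - f‖ := by
    rw [norm_pos_iff]
    intro h0
    rw [sub_eq_zero] at h0
    exact h1K (by rw [h0]; exact hf)
  have holder := integral_mul_norm_le_Lp_mul_Lq hqp hu hGmem
  have h1le : 1 ≤ (∫ ω, |u ω| ^ q ∂P) ^ (1 / q) * ‖one - f‖ := by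
    calc (1:ℝ) = ∫ ω, u ω * G ω ∂P := part1.symm
    _ ≤ |∫ ω, u ω * G ω ∂P| := le_abs_self _
    _ ≤ ∫ ω, ‖u ω‖ * ‖G ω‖ ∂P := by
        simpa [Real.norm_eq_abs, abs_mul] using
          norm_integral_le_integral_norm (μ := P) (fun ω => u ω * G ω)
    _ ≤ (∫ ω, ‖u ω‖ ^ q ∂P) ^ (1 / q) * (∫ ω, ‖G ω‖ ^ p ∂P) ^ (1 / p) := holder
    _ = (∫ ω, |u ω| ^ q ∂P) ^ (1 / q) * ‖one - f‖ := by
        rw [hnorm]; simp [Real.norm_eq_abs]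
  have part2 : 1 / ‖one - f‖ ≤ (∫ ω, |u ω| ^ q ∂P) ^ (1 / q) := by
    rw [div_le_iff₀ hB]; exact h1le
  refine ⟨part1, part2, ?_⟩
  -- Part 3
  have hsmem : ∀ {w : Ω → ℝ}, MemLp w (ENNReal.ofReal p) P →
      MemLp (fun ω => Real.sign (w ω) * |w ω| ^ (p - 1)) (ENNReal.ofReal q) P :=
    fun hw => qopt_memLp_s hp1 hq hpprod hw
  -- step 3b : nonnegativity of ∫ s(G) F
  have hsf : 0 ≤ ∫ ω, (Real.sign (G ω) * |G ω| ^ (p - 1)) * F ω ∂P := by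
    set t : ℕ → ℝ := fun n => ((n:ℝ) + 1)⁻¹ with ht
    have ht0 : ∀ n, 0 < t n := fun n => by positivity
    have ht1 : ∀ n, t n ≤ 1 := fun n => by
      rw [ht]
      exact inv_le_one_of_one_le₀ (by exact_mod_cast Nat.le_add_left 1 n)
    set w : ℕ → Ω → ℝ := fun n ω => G ω + t n * F ω with hw
    have hwmem : ∀ n, MemLp (w n) (ENNReal.ofReal p) P := fun n =>
      hGmem.add (hFmem.const_mul _)
    have hGp_int : Integrable (fun ω => |G ω| ^ p) P := by
      simpa [Real.norm_eq_abs, toReal_ofReal hp0.le] using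
        hGmem.integrable_norm_rpow (by simp [ENNReal.ofReal_eq_zero, hp0.not_ge]) ofReal_ne_top
    have han : ∀ n, 0 ≤ ∫ ω, (Real.sign (w n ω) * |w n ω| ^ (p - 1)) * F ω ∂P := by
      intro n
      have hwp_int : Integrable (fun ω => |w n ω| ^ p) P := by
        simpa [Real.norm_eq_abs, toReal_ofReal hp0.le] using
          (hwmem n).integrable_norm_rpow
            (by simp [ENNReal.ofReal_eq_zero, hp0.not_ge]) ofReal_ne_top
      have hKmem : (1 - t n) • f ∈ K := K.smul_mem _ hf
      have hnorm_le := hmin _ hKmem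
      have heqLp : one - (1 - t n) • f = (one - f) + (t n) • f := by
        rw [sub_smul, one_smul]; abel
      have hcoeff : ⇑((one - f) + (t n) • f) =ᵐ[P] w n := by
        filter_upwards [Lp.coeFn_add (one - f) ((t n) • f), Lp.coeFn_smul (t n) f] with ω h1 h2
        simp only [hw, h1, Pi.add_apply, h2, Pi.smul_apply, smul_eq_mul, hGdef, hFdef]
      have hwint_nonneg : 0 ≤ ∫ ω, |w n ω| ^ p ∂P :=
        integral_nonneg fun ω => Real.rpow_nonneg (abs_nonneg _) _
      have hIlow : ∫ ω, |G ω| ^ p ∂P ≤ ∫ ω, |w n ω| ^ p ∂P := by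
        have h1 : (∫ ω, |G ω| ^ p ∂P) ^ (1 / p) ≤ (∫ ω, |w n ω| ^ p ∂P) ^ (1 / p) := by
          have hthis := hnorm_le
          rw [heqLp, hnorm, qopt_norm_eq hp0 ((one - f) + (t n) • f)] at hthis
          have hcongr : ∫ ω, |((one - f) + (t n) • f : Lp ℝ (ENNReal.ofReal p) P) ω| ^ p ∂P
              = ∫ ω, |w n ω| ^ p ∂P := by
            refine integral_congr_ae ?_
            filter_upwards [hcoeff] with ω h
            rw [h]
          rwa [hcongr] at hthis
        calc ∫ ω, |G ω| ^ p ∂P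
            = ((∫ ω, |G ω| ^ p ∂P) ^ (1 / p)) ^ p := by
              rw [one_div, Real.rpow_inv_rpow hint_nonneg hp0.ne']
          _ ≤ ((∫ ω, |w n ω| ^ p ∂P) ^ (1 / p)) ^ p :=
              Real.rpow_le_rpow (Real.rpow_nonneg hint_nonneg _) h1 hp0.le
          _ = ∫ ω, |w n ω| ^ p ∂P := by
              rw [one_div, Real.rpow_inv_rpow hwint_nonneg hp0.ne']
      have hptw : ∀ ω, |w n ω| ^ p - |G ω| ^ p
          ≤ (p * t n) * ((Real.sign (w n ω) * |w n ω| ^ (p - 1)) * F ω) := by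
        intro ω
        have h := qopt_tangent hp1 (G ω) (w n ω)
        have hcalc : p * (Real.sign (w n ω) * |w n ω| ^ (p - 1)) * (G ω - w n ω)
            = -((p * t n) * ((Real.sign (w n ω) * |w n ω| ^ (p - 1)) * F ω)) := by
          have : G ω - w n ω = -(t n * F ω) := by simp [hw]
          rw [this]; ring
        linarith [h, hcalc.le, hcalc.ge]
      have hint_swF : Integrable (fun ω => (Real.sign (w n ω) * |w n ω| ^ (p - 1)) * F ω) P :=
        qopt_integrable_mul hqp (hsmem (hwmem n)) hFmem
      have hmono : ∫ ω, (|w n ω| ^ p - |G ω| ^ p) ∂P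
          ≤ ∫ ω, (p * t n) * ((Real.sign (w n ω) * |w n ω| ^ (p - 1)) * F ω) ∂P :=
        integral_mono (hwp_int.sub hGp_int) (hint_swF.const_mul (p * t n)) (fun ω => hptw ω)
      rw [integral_sub hwp_int hGp_int, integral_const_mul] at hmono
      have hnn : 0 ≤ (p * t n) * ∫ ω, (Real.sign (w n ω) * |w n ω| ^ (p - 1)) * F ω ∂P :=
        le_trans (by linarith [hIlow]) hmono
      by_contra hcon
      push_neg at hcon
      exact absurd hnn (not_le.2 (mul_neg_of_pos_of_neg (mul_pos hp0 (ht0 n)) hcon))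
    have hlim : Tendsto (fun n => ∫ ω, (Real.sign (w n ω) * |w n ω| ^ (p - 1)) * F ω ∂P) atTop
        (nhds (∫ ω, (Real.sign (G ω) * |G ω| ^ (p - 1)) * F ω ∂P)) := by
      have hvmem : MemLp (fun ω => |G ω| + |F ω|) (ENNReal.ofReal p) P := by
        simpa [Real.norm_eq_abs, Pi.add_def] using hGmem.norm.add hFmem.norm
      refine tendsto_integral_of_dominated_convergence
        (fun ω => (|G ω| + |F ω|) ^ (p - 1) * |F ω|)
        (fun n => ((hsmem (hwmem n)).1.mul hFmem.1)) ?_ ?_ ?_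
      · have hint := (qopt_integrable_mul hqp (hsmem hvmem) hFmem).abs
        refine hint.congr (ae_of_all _ fun ω => ?_)
        dsimp only
        rw [abs_mul, qopt_abs_s hp1]
        congr 1
        rw [abs_of_nonneg (by positivity : (0:ℝ) ≤ |G ω| + |F ω|)]
      · intro n
        refine ae_of_all _ fun ω => ?_
        rw [Real.norm_eq_abs, abs_mul, qopt_abs_s hp1]
        refine mul_le_mul_of_nonneg_right ?_ (abs_nonneg _)
        refine Real.rpow_le_rpow (abs_nonneg _) ?_ (by linarith)
        calc |w n ω| ≤ |G ω| + |t n * F ω| := abs_add_le _ _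
          _ = |G ω| + t n * |F ω| := by rw [abs_mul, abs_of_pos (ht0 n)]
          _ ≤ |G ω| + |F ω| := by nlinarith [ht1 n, ht0 n, abs_nonneg (F ω)]
      · refine ae_of_all _ fun ω => ?_
        have htt : Tendsto t atTop (nhds (0:ℝ)) := by
          rw [ht]; simpa only [one_div] using tendsto_one_div_add_atTop_nhds_zero_nat (𝕜 := ℝ)
        have hwt : Tendsto (fun n => w n ω) atTop (nhds (G ω)) := by
          have h2 := (htt.mul_const (F ω)).const_add (G ω)
          simpa [hw] using h2
        exact (((qopt_continuous_s hp1).continuousAt.tendsto).comp hwt).mul_const (F ω)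
    exact ge_of_tendsto hlim (Eventually.of_forall han)
  -- step 3c-3e
  have hsGmem := hsmem hGmem
  have hint_sGG : Integrable (fun ω => (Real.sign (G ω) * |G ω| ^ (p - 1)) * G ω) P :=
    qopt_integrable_mul hqp hsGmem hGmem
  have hint_sGF : Integrable (fun ω => (Real.sign (G ω) * |G ω| ^ (p - 1)) * F ω) P :=
    qopt_integrable_mul hqp hsGmem hFmem
  have hsGG : ∫ ω, (Real.sign (G ω) * |G ω| ^ (p - 1)) * G ω ∂P = ∫ ω, |G ω| ^ p ∂P :=
    integral_congr_ae (ae_of_all _ fun ω => qopt_s_mul_self hp1 (G ω))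
  set c : ℝ := ∫ ω', Real.sign (G ω') * |G ω'| ^ (p - 1) ∂P with hcdef
  have hc_eq : c = (∫ ω, |G ω| ^ p ∂P)
      + ∫ ω, (Real.sign (G ω) * |G ω| ^ (p - 1)) * F ω ∂P := by
    rw [hcdef]
    have haeq : (fun ω' => Real.sign (G ω') * |G ω'| ^ (p - 1)) =ᵐ[P]
        fun ω' => (Real.sign (G ω') * |G ω'| ^ (p - 1)) * G ω'
          + (Real.sign (G ω') * |G ω'| ^ (p - 1)) * F ω' := by
      filter_upwards [hGae] with ω h
      have hsum : G ω + F ω = 1 := by rw [h]; ring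
      rw [← mul_add, hsum, mul_one]
    rw [integral_congr_ae haeq, integral_add hint_sGG hint_sGF, hsGG]
  have hBp : ‖one - f‖ ^ p = ∫ ω, |G ω| ^ p ∂P := by
    rw [hnorm, one_div, Real.rpow_inv_rpow hint_nonneg hp0.ne']
  have hBppos : 0 < ‖one - f‖ ^ p := Real.rpow_pos_of_pos hB p
  have hcpos : 0 < c := by rw [hc_eq, ← hBp]; linarith [hsf, hBppos]
  have hcge : ‖one - f‖ ^ p ≤ c := by rw [hc_eq, ← hBp]; linarith [hsf]
  -- compute LHS
  have hintc : (fun ω => |(Real.sign (G ω) * |G ω| ^ (p - 1)) / c| ^ q)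
      = fun ω => |G ω| ^ p / c ^ q := by
    funext ω
    rw [abs_div, Real.div_rpow (abs_nonneg _) (abs_nonneg _),
      qopt_abs_s_rpow hp1 hq0 hpprod, abs_of_pos hcpos]
  calc (∫ ω, |(Real.sign (G ω) * |G ω| ^ (p - 1)) / c| ^ q ∂P) ^ (1 / q)
      = ((∫ ω, |G ω| ^ p ∂P) / c ^ q) ^ (1 / q) := by rw [hintc, integral_div]
    _ = (‖one - f‖ ^ p) ^ (1 / q) / c := by
        rw [← hBp, Real.div_rpow hBppos.le (Real.rpow_nonneg hcpos.le q), one_div,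
          Real.rpow_rpow_inv hcpos.le hq0.ne']
    _ ≤ (‖one - f‖ ^ p) ^ (1 / q) / ‖one - f‖ ^ p :=
        div_le_div_of_nonneg_left (Real.rpow_nonneg hBppos.le _) hBppos hcge
    _ = 1 / ‖one - f‖ := by
        rw [← Real.rpow_mul hB.le, ← Real.rpow_sub hB]
        have hexp : p * (1 / q) - p = -1 := by
          have h1 : p / q = p - 1 := hpq.div_conj_eq_sub_one
          field_simp at h1 ⊢
          linarith [h1]
        rw [hexp, Real.rpow_neg_one, one_div]
    _ ≤ (∫ ω, |u ω| ^ q ∂P) ^ (1 / q) := part2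
end

section
/- Let q > 1 and suppose M^s ∩ L^q(P) ≠ ∅. If u* = g*/E[g*] is the q-optimal density (minimal L^q-norm element of M^s ∩ L^q(P)), where g* = sgn(1-f)|1-f|^{p-1} and f minimizes ‖1-f‖_p over K̄₀, then E[u · sgn(g*)|g*|^{q-1}] = 1 for every u ∈ M^s ∩ L^q(P). -/
open MeasureTheory ENNReal

/-- `u` is the density of a signed local martingale measure: it is integrable,
annihilates `K₀` and has expectation `1`. -/
def IsSignedMMDensity {Ω : Type*} [MeasurableSpace Ω] (P : Measure Ω)
    (K₀ : Submodule ℝ (Ω → ℝ)) (u : Ω → ℝ) : Prop :=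
  Integrable u P ∧ (∀ h ∈ K₀, ∫ ω, u ω * h ω ∂P = 0) ∧ ∫ ω, u ω ∂P = 1

/-- `f` belongs to the closure of `K₀` in `L^p(P)`. -/
def InLpClosure {Ω : Type*} [MeasurableSpace Ω] (P : Measure Ω)
    (K₀ : Submodule ℝ (Ω → ℝ)) (p : ℝ) (f : Ω → ℝ) : Prop :=
  ∀ ε : ℝ, 0 < ε → ∃ h ∈ K₀,
    eLpNorm (fun ω => f ω - h ω) (ENNReal.ofReal p) P < ENNReal.ofReal ε

namespace QOpt

open MeasureTheory ENNReal Filter Real Set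

noncomputable def G (r x : ℝ) : ℝ := Real.sign x * |x| ^ r

lemma G_of_pos {r x : ℝ} (hx : 0 < x) : G r x = x ^ r := by
  rw [G, Real.sign_of_pos hx, abs_of_pos hx, one_mul]

lemma G_of_neg {r x : ℝ} (hx : x < 0) : G r x = -(-x) ^ r := by
  rw [G, Real.sign_of_neg hx, abs_of_neg hx, neg_one_mul]

lemma G_zero {r : ℝ} : G r 0 = 0 := by simp [G, Real.sign_zero]

lemma abs_G {r x : ℝ} (hr : 0 < r) : |G r x| = |x| ^ r := by
  rcases lt_trichotomy x 0 with h | h | h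
  · rw [G_of_neg h, abs_neg, abs_of_nonneg (Real.rpow_nonneg (by linarith) _), abs_of_neg h]
  · simp [h, G_zero, Real.zero_rpow hr.ne']
  · rw [G_of_pos h, abs_of_nonneg (Real.rpow_nonneg h.le _), abs_of_pos h]

lemma G_nonneg {r x : ℝ} (hx : 0 ≤ x) : 0 ≤ G r x := by
  rcases eq_or_lt_of_le hx with h | h
  · simp [← h, G_zero]
  · rw [G_of_pos h]; exact Real.rpow_nonneg h.le _

lemma G_nonpos {r x : ℝ} (hx : x ≤ 0) : G r x ≤ 0 := by
  rcases eq_or_lt_of_le hx with h | h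
  · simp [h, G_zero]
  · rw [G_of_neg h]
    simp [Real.rpow_nonneg (by linarith : (0:ℝ) ≤ -x) r]

lemma G_mono {r : ℝ} (hr : 0 < r) : Monotone (G r) := by
  intro a b hab
  rcases le_or_gt 0 a with ha | ha
  · rcases eq_or_lt_of_le ha with h | h
    · rw [← h, G_zero]; exact G_nonneg (by linarith)
    · rw [G_of_pos h, G_of_pos (lt_of_lt_of_le h hab)]
      exact Real.rpow_le_rpow h.le hab hr.le
  · rcases le_or_gt 0 b with hb | hb
    · exact le_trans (G_nonpos ha.le) (G_nonneg hb)
    · rw [G_of_neg ha, G_of_neg hb]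
      have : (-b : ℝ) ≤ -a := by linarith
      have := Real.rpow_le_rpow (by linarith : (0:ℝ) ≤ -b) this hr.le
      linarith

lemma G_mul_self {r x : ℝ} (hr : 0 < r) : G r x * x = |x| ^ (r + 1) := by
  rcases lt_trichotomy x 0 with h | h | h
  · rw [G_of_neg h, abs_of_neg h, Real.rpow_add_one (by intro hc; nlinarith : (-x) ≠ 0)]
    ring
  · simp [h, G_zero, Real.zero_rpow (by positivity : r + 1 ≠ 0)]
  · rw [G_of_pos h, abs_of_pos h, Real.rpow_add_one h.ne']

lemma G_involution {p q x : ℝ} (hp : 1 < p) (hpq : (p - 1) * (q - 1) = 1) :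
    G (q - 1) (G (p - 1) x) = x := by
  have hp1 : (0:ℝ) < p - 1 := by linarith
  rcases lt_trichotomy x 0 with h | h | h
  · have h1 : (0:ℝ) < (-x) ^ (p - 1) := Real.rpow_pos_of_pos (by linarith) _
    rw [G_of_neg h, G_of_neg (by linarith : -(-x) ^ (p-1) < 0)]
    rw [neg_neg]
    have : ((-x) ^ (p-1)) ^ (q-1) = -x := by
      rw [← Real.rpow_mul (by linarith : (0:ℝ) ≤ -x), hpq, Real.rpow_one]
    rw [this]; ring
  · simp [h, G_zero]
  · have h1 : (0:ℝ) < x ^ (p - 1) := Real.rpow_pos_of_pos h _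
    rw [G_of_pos h, G_of_pos h1, ← Real.rpow_mul h.le, hpq, Real.rpow_one]

lemma G_const_mul {r c x : ℝ} (hc : 0 < c) : G r (c * x) = c ^ r * G r x := by
  rcases lt_trichotomy x 0 with h | h | h
  · rw [G_of_neg h, G_of_neg (by exact mul_neg_of_pos_of_neg hc h)]
    rw [neg_mul_eq_mul_neg, Real.mul_rpow hc.le (by linarith)]
    ring
  · simp [h, G_zero]
  · rw [G_of_pos h, G_of_pos (by positivity), Real.mul_rpow hc.le h.le]

lemma G_continuous {r : ℝ} (hr : 0 < r) : Continuous (G r) := by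
  have h1 : Continuous fun x : ℝ => (max x 0) ^ r := by
    apply Continuous.rpow_const (continuous_id.max continuous_const)
    intro x; right; exact hr.le
  have h2 : Continuous fun x : ℝ => (max (-x) 0) ^ r := by
    apply Continuous.rpow_const (continuous_neg.max continuous_const)
    intro x; right; exact hr.le
  have : G r = fun x : ℝ => (max x 0) ^ r - (max (-x) 0) ^ r := by
    funext x
    rcases lt_trichotomy x 0 with h | h | h
    · rw [G_of_neg h, max_eq_right h.le, max_eq_left (by linarith : (0:ℝ) ≤ -x),
        Real.zero_rpow hr.ne']
      ring
    · simp [h, G_zero, Real.zero_rpow hr.ne']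
    · rw [G_of_pos h, max_eq_left h.le, max_eq_right (by linarith : -x ≤ (0:ℝ)),
        Real.zero_rpow hr.ne']
      ring
  rw [this]
  exact h1.sub h2

lemma G_measurable {r : ℝ} (hr : 0 < r) : Measurable (G r) :=
  (G_continuous hr).measurable

lemma hasDerivAt_abs_rpow {r : ℝ} (hr : 1 < r) (x : ℝ) :
    HasDerivAt (fun z : ℝ => |z| ^ r) (r * G (r - 1) x) x := by
  rcases lt_trichotomy x 0 with h | h | h
  · have key : HasDerivAt (fun z : ℝ => (-z) ^ r) (r * (-x) ^ (r - 1) * (-1)) x := by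
      exact (Real.hasDerivAt_rpow_const (x := -x) (Or.inl (by linarith))).comp x (hasDerivAt_neg x)
    have heq : (fun z : ℝ => |z| ^ r) =ᶠ[nhds x] fun z => (-z) ^ r := by
      filter_upwards [eventually_lt_nhds h] with z hz
      rw [abs_of_neg hz]
    have := key.congr_of_eventuallyEq heq
    have e : r * G (r - 1) x = r * (-x) ^ (r - 1) * -1 := by rw [G_of_neg h]; ring
    rw [e]; exact this
  · subst h
    rw [hasDerivAt_iff_tendsto_slope]
    have hval : r * G (r - 1) 0 = 0 := by simp [G_zero]
    rw [hval]
    apply squeeze_zero_norm' (a := fun z : ℝ => |z| ^ (r - 1))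
    · filter_upwards [self_mem_nhdsWithin] with z (hz : z ≠ 0)
      have hz' : |z| ≠ 0 := abs_ne_zero.mpr hz
      have hslope : slope (fun z : ℝ => |z| ^ r) 0 z = z⁻¹ * |z| ^ r := by
        simp [slope, abs_zero, Real.zero_rpow (by linarith : r ≠ 0)]
      have habs : |z| ^ r = |z| ^ (r - 1) * |z| := by
        nth_rewrite 1 [show r = (r - 1) + 1 by ring]
        rw [Real.rpow_add_one hz']
      rw [hslope, norm_mul, norm_inv, Real.norm_eq_abs, Real.norm_eq_abs,
        abs_of_nonneg (Real.rpow_nonneg (abs_nonneg z) r), habs,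
        mul_comm (|z| ^ (r-1)) (|z|), ← mul_assoc, inv_mul_cancel₀ hz', one_mul]
    · have hc : ContinuousAt (fun z : ℝ => |z| ^ (r - 1)) 0 :=
        (continuous_abs.rpow_const (fun z => Or.inr (by linarith : (0:ℝ) ≤ r - 1))).continuousAt
      have h0 : |(0:ℝ)| ^ (r - 1) = 0 := by
        simp [Real.zero_rpow (by linarith : r - 1 ≠ 0)]
      have := hc.tendsto
      rw [h0] at this
      exact this.mono_left nhdsWithin_le_nhds
  · have key : HasDerivAt (fun z : ℝ => z ^ r) (r * x ^ (r - 1)) x :=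
      Real.hasDerivAt_rpow_const (Or.inl h.ne')
    have heq : (fun z : ℝ => |z| ^ r) =ᶠ[nhds x] fun z => z ^ r := by
      filter_upwards [eventually_gt_nhds h] with z hz
      rw [abs_of_pos hz]
    have := key.congr_of_eventuallyEq heq
    rw [G_of_pos h]; exact this

lemma tangent_line {r : ℝ} (hr : 1 < r) (x y : ℝ) :
    |x| ^ r + r * G (r - 1) x * (y - x) ≤ |y| ^ r := by
  have hcont : Continuous fun z : ℝ => |z| ^ r :=
    (continuous_abs.rpow_const (fun z => Or.inr (by linarith)))
  have hd : ∀ z : ℝ, HasDerivAt (fun z : ℝ => |z| ^ r) (r * G (r - 1) z) z :=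
    hasDerivAt_abs_rpow hr
  have hmono : Monotone (fun z => r * G (r - 1) z) := by
    intro a b hab
    have := G_mono (by linarith : (0:ℝ) < r - 1) hab
    have hr0 : (0:ℝ) ≤ r := by linarith
    exact mul_le_mul_of_nonneg_left this hr0
  rcases lt_trichotomy x y with h | h | h
  · obtain ⟨c, hc, hceq⟩ := exists_hasDerivAt_eq_slope (fun z : ℝ => |z| ^ r)
      (fun z => r * G (r - 1) z) h hcont.continuousOn (fun z _ => hd z)
    have h1 : r * G (r-1) x ≤ r * G (r-1) c := hmono hc.1.le
    have h2 : (|y| ^ r - |x| ^ r) = (r * G (r-1) c) * (y - x) := by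
      rw [hceq, div_mul_cancel₀]
      exact sub_ne_zero.mpr h.ne' 
    nlinarith [h1, h2]
  · subst h; simp
  · obtain ⟨c, hc, hceq⟩ := exists_hasDerivAt_eq_slope (fun z : ℝ => |z| ^ r)
      (fun z => r * G (r - 1) z) h hcont.continuousOn (fun z _ => hd z)
    have h1 : r * G (r-1) c ≤ r * G (r-1) x := hmono hc.2.le
    have h2 : (|x| ^ r - |y| ^ r) = (r * G (r-1) c) * (x - y) := by
      rw [hceq, div_mul_cancel₀]
      exact sub_ne_zero.mpr h.ne' 
    nlinarith [h1, h2]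




variable {Ω : Type*} [MeasurableSpace Ω] {P : Measure Ω}

lemma enorm_eq {x : ℝ} (hx : 0 ≤ x) : (‖x‖₊ : ℝ≥0∞) = ENNReal.ofReal x := by
  simp [← enorm_eq_nnnorm, ← ofReal_norm, Real.norm_eq_abs, abs_of_nonneg hx]

lemma memLp_G {r : ℝ} (hr : 1 < r) {v : Ω → ℝ} (hv : MemLp v (ENNReal.ofReal r) P) :
    MemLp (fun ω => G (r - 1) (v ω)) (ENNReal.ofReal (r / (r - 1))) P := by
  have hr0 : (0:ℝ) < r := by linarith
  have hr1 : (0:ℝ) < r - 1 := by linarith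
  have hs0 : (0:ℝ) < r / (r - 1) := by positivity
  have hsne : ENNReal.ofReal (r / (r-1)) ≠ 0 := by
    simp [ENNReal.ofReal_eq_zero, not_le, hs0]
  have hrne : ENNReal.ofReal r ≠ 0 := by simp [ENNReal.ofReal_eq_zero, not_le, hr0]
  constructor
  · exact ((G_measurable hr1).comp_aemeasurable
      hv.aestronglyMeasurable.aemeasurable).aestronglyMeasurable
  · rw [eLpNorm_lt_top_iff_lintegral_rpow_enorm_lt_top hsne ofReal_ne_top]
    have hkey : ∀ ω, ‖G (r-1) (v ω)‖ₑ ^ (ENNReal.ofReal (r/(r-1))).toReal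
        = ‖v ω‖ₑ ^ r := by
      intro ω
      rw [toReal_ofReal hs0.le]
      have h1 : ‖G (r-1) (v ω)‖ₑ = ‖v ω‖ₑ ^ (r - 1) := by
        rw [← ofReal_norm, ← ofReal_norm,
          Real.norm_eq_abs, Real.norm_eq_abs, abs_G hr1,
          ← ENNReal.ofReal_rpow_of_nonneg (abs_nonneg _) hr1.le]
      rw [h1, ← ENNReal.rpow_mul]
      congr 1
      field_simp
    simp_rw [hkey]
    have := lintegral_rpow_enorm_lt_top_of_eLpNorm_lt_top hrne ofReal_ne_top hv.2
    rwa [toReal_ofReal hr0.le] at this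

lemma integrable_mul_conj {r : ℝ} (hr : 1 < r) {a b : Ω → ℝ}
    (ha : MemLp a (ENNReal.ofReal r) P)
    (hb : MemLp b (ENNReal.ofReal (r / (r - 1))) P) :
    Integrable (fun ω => a ω * b ω) P := by
  have hr0 : (0:ℝ) < r := by linarith
  have hr1 : (0:ℝ) < r - 1 := by linarith
  have hs0 : (0:ℝ) < r / (r - 1) := by positivity
  have h := hb.smul (r := 1) ha (hpqr := ⟨?_⟩)
  · exact (memLp_one_iff_integrable.mp h).congr
      (Filter.Eventually.of_forall fun ω => by simp [Pi.smul_apply, smul_eq_mul])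
  · rw [← ENNReal.ofReal_inv_of_pos hr0,
      ← ENNReal.ofReal_inv_of_pos hs0, ← ENNReal.ofReal_add (by positivity) (by positivity)]
    rw [show r⁻¹ + (r/(r-1))⁻¹ = 1 by field_simp; ring]
    simp

lemma integral_rpow_le_of_eLpNorm_le {r : ℝ} (hr : 0 < r) {g₁ g₂ : Ω → ℝ}
    (h₁ : MemLp g₁ (ENNReal.ofReal r) P) (h₂ : MemLp g₂ (ENNReal.ofReal r) P)
    (hle : eLpNorm g₁ (ENNReal.ofReal r) P ≤ eLpNorm g₂ (ENNReal.ofReal r) P) :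
    ∫ ω, |g₁ ω| ^ r ∂P ≤ ∫ ω, |g₂ ω| ^ r ∂P := by
  have hrne : ENNReal.ofReal r ≠ 0 := by simp [ENNReal.ofReal_eq_zero, not_le, hr]
  rw [h₁.eLpNorm_eq_integral_rpow_norm hrne ofReal_ne_top,
    h₂.eLpNorm_eq_integral_rpow_norm hrne ofReal_ne_top] at hle
  rw [ENNReal.ofReal_le_ofReal_iff (by positivity)] at hle
  simp_rw [toReal_ofReal hr.le, Real.norm_eq_abs] at hle
  have h1 : (0:ℝ) ≤ ∫ ω, |g₁ ω| ^ r ∂P := integral_nonneg fun ω => by positivity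
  have h2 : (0:ℝ) ≤ ∫ ω, |g₂ ω| ^ r ∂P := integral_nonneg fun ω => by positivity
  have := Real.rpow_le_rpow (by positivity) hle hr.le
  rwa [← Real.rpow_mul h1, ← Real.rpow_mul h2, inv_mul_cancel₀ hr.ne',
    Real.rpow_one, Real.rpow_one] at this

lemma integrable_abs_rpow {r : ℝ} (hr : 0 < r) {g : Ω → ℝ}
    (hg : MemLp g (ENNReal.ofReal r) P) : Integrable (fun ω => |g ω| ^ r) P := by
  have hrne : ENNReal.ofReal r ≠ 0 := by simp [ENNReal.ofReal_eq_zero, not_le, hr]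
  have := hg.integrable_norm_rpow hrne ofReal_ne_top
  simp_rw [toReal_ofReal hr.le, Real.norm_eq_abs] at this
  exact this


lemma var_ineq {r : ℝ} (hr : 1 < r) {a b : Ω → ℝ}
    (ha : MemLp a (ENNReal.ofReal r) P) (hb : MemLp b (ENNReal.ofReal r) P)
    {T : ℕ → ℝ} (hT0 : ∀ n, 0 < T n) (hT1 : ∀ n, T n ≤ 1)
    (hTlim : Tendsto T atTop (nhds 0))
    (hmin : ∀ n, ∫ ω, |a ω| ^ r ∂P ≤ ∫ ω, |a ω + T n * b ω| ^ r ∂P) :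
    0 ≤ ∫ ω, G (r - 1) (a ω) * b ω ∂P := by
  have hr0 : (0:ℝ) < r := by linarith
  have hr1 : (0:ℝ) < r - 1 := by linarith
  have hx : ∀ n, MemLp (fun ω => a ω + T n * b ω) (ENNReal.ofReal r) P :=
    fun n => ha.add (hb.const_mul (T n))
  have hInt1 : Integrable (fun ω => |a ω| ^ r) P := integrable_abs_rpow hr0 ha
  have key : ∀ n, 0 ≤ ∫ ω, G (r - 1) (a ω + T n * b ω) * b ω ∂P := by
    intro n
    have hInt2 : Integrable (fun ω => |a ω + T n * b ω| ^ r) P :=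
      integrable_abs_rpow hr0 (hx n)
    have hInt3 : Integrable (fun ω => G (r-1) (a ω + T n * b ω) * b ω) P :=
      (integrable_mul_conj hr hb (memLp_G hr (hx n))).congr
        (Filter.Eventually.of_forall fun ω => mul_comm _ _)
    have hptwise : ∀ ω, 0 ≤ |a ω| ^ r - |a ω + T n * b ω| ^ r
        + r * T n * (G (r-1) (a ω + T n * b ω) * b ω) := by
      intro ω
      have := tangent_line hr (a ω + T n * b ω) (a ω)
      nlinarith [this]
    have hsum : (0:ℝ) ≤ ∫ ω, (|a ω| ^ r - |a ω + T n * b ω| ^ r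
        + r * T n * (G (r-1) (a ω + T n * b ω) * b ω)) ∂P :=
      integral_nonneg hptwise
    have hI12 : Integrable (fun ω => |a ω| ^ r - |a ω + T n * b ω| ^ r) P :=
      hInt1.sub hInt2
    rw [integral_add hI12 (hInt3.const_mul _), integral_sub hInt1 hInt2,
      integral_const_mul] at hsum
    have hmn := hmin n
    have hrT : (0:ℝ) < r * T n := by
      have := hT0 n; positivity
    have h4 : 0 ≤ r * T n * ∫ ω, G (r-1) (a ω + T n * b ω) * b ω ∂P := by linarith
    exact (mul_nonneg_iff_of_pos_left hrT).mp h4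
  -- dominated convergence
  have hv : MemLp (fun ω => |a ω| + |b ω|) (ENNReal.ofReal r) P := by
    have := ha.norm.add hb.norm
    exact this
  have hGv := memLp_G hr hv
  have hbound_int : Integrable (fun ω => (|a ω| + |b ω|) ^ (r-1) * |b ω|) P := by
    refine ((integrable_mul_conj hr hb hGv).abs).congr
      (Filter.Eventually.of_forall fun ω => ?_)
    simp only [abs_mul, abs_G hr1]
    rw [abs_of_nonneg (by positivity : (0:ℝ) ≤ |a ω| + |b ω|), mul_comm]
  have htend : Tendsto (fun n => ∫ ω, G (r - 1) (a ω + T n * b ω) * b ω ∂P) atTop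
      (nhds (∫ ω, G (r - 1) (a ω) * b ω ∂P)) := by
    apply tendsto_integral_of_dominated_convergence
      (fun ω => (|a ω| + |b ω|) ^ (r-1) * |b ω|)
    · intro n
      exact (((G_measurable hr1).comp_aemeasurable
        (hx n).aestronglyMeasurable.aemeasurable).aestronglyMeasurable).mul
        hb.aestronglyMeasurable
    · exact hbound_int
    · intro n
      refine Filter.Eventually.of_forall fun ω => ?_
      rw [norm_mul, Real.norm_eq_abs, Real.norm_eq_abs, abs_G hr1]
      have habs : |a ω + T n * b ω| ≤ |a ω| + |b ω| := by
        refine (abs_add_le _ _).trans ?_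
        have : |T n * b ω| ≤ |b ω| := by
          rw [abs_mul]
          have h1 : |T n| ≤ 1 := by
            rw [abs_of_pos (hT0 n)]; exact hT1 n
          nlinarith [abs_nonneg (b ω)]
        linarith
      exact mul_le_mul_of_nonneg_right
        (Real.rpow_le_rpow (abs_nonneg _) habs hr1.le) (abs_nonneg _)
    · refine Filter.Eventually.of_forall fun ω => ?_
      have h1 : Tendsto (fun n => a ω + T n * b ω) atTop (nhds (a ω)) := by
        have := (hTlim.mul_const (b ω)).const_add (a ω)
        simpa using this
      exact (((G_continuous hr1).continuousAt).tendsto.comp h1).mul tendsto_const_nhds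
  exact ge_of_tendsto htend (Filter.Eventually.of_forall key)




lemma exists_good_t [IsProbabilityMeasure P]
    (K₀ : Submodule ℝ (Ω → ℝ))
    (hbdd : ∀ h ∈ K₀, ∃ C : ℝ, ∀ᵐ ω ∂P, |h ω| ≤ C)
    {ustar u : Ω → ℝ} (hustar_int : Integrable ustar P) (hu_int : Integrable u P)
    (hstar_ann : ∀ h ∈ K₀, ∫ ω, ustar ω * h ω ∂P = 0)
    (hu_ann : ∀ h ∈ K₀, ∫ ω, u ω * h ω ∂P = 0)
    {α β : ℝ} (hαβ : α < β) :
    ∃ t, t ∈ Set.Ioo α β ∧ t ≠ 0 ∧ ∀ h ∈ K₀,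
      ∫ ω, (ustar ω + t * (u ω - ustar ω)) * h ω ∂P = 0 := by
  set U : Ω → ℝ := hustar_int.1.mk ustar with hU_def
  set V : Ω → ℝ := hu_int.1.mk u with hV_def
  have hUeq : ustar =ᵐ[P] U := hustar_int.1.ae_eq_mk
  have hVeq : u =ᵐ[P] V := hu_int.1.ae_eq_mk
  have hUsm : StronglyMeasurable U := hustar_int.1.stronglyMeasurable_mk
  have hVsm : StronglyMeasurable V := hu_int.1.stronglyMeasurable_mk
  set A : ℝ → Set Ω := fun t => {ω | U ω + t * (V ω - U ω) = 0 ∧ U ω ≠ 0} with hA_def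
  have hAmeas : ∀ t, MeasurableSet (A t) := by
    intro t
    have h1 : Measurable fun ω => U ω + t * (V ω - U ω) :=
      hUsm.measurable.add ((hVsm.measurable.sub hUsm.measurable).const_mul t)
    have : A t = (fun ω => U ω + t * (V ω - U ω)) ⁻¹' {0} ∩ (U ⁻¹' {0})ᶜ := by
      ext ω; simp [hA_def]
    rw [this]
    exact (h1 (measurableSet_singleton 0)).inter
      ((hUsm.measurable (measurableSet_singleton 0)).compl)
  have hdisj : Pairwise (Function.onFun Disjoint A) := by
    intro t₁ t₂ hne
    rw [Function.onFun, Set.disjoint_left]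
    rintro ω ⟨h1, hU0⟩ ⟨h2, -⟩
    by_cases hX : V ω - U ω = 0
    · rw [hX, mul_zero, add_zero] at h1
      exact hU0 h1
    · have e1 : t₁ * (V ω - U ω) = -U ω := by linarith
      have e2 : t₂ * (V ω - U ω) = -U ω := by linarith
      exact hne (mul_right_cancel₀ hX (e1.trans e2.symm))
  have hcount : Set.Countable {t : ℝ | 0 < P (A t)} :=
    MeasureTheory.Measure.countable_meas_pos_of_disjoint_iUnion hAmeas hdisj
  -- find a good parameter value
  have hex : ∃ t ∈ Set.Ioo α β, t ≠ 0 ∧ P (A t) = 0 := by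
    by_contra hcon
    push_neg at hcon
    have hsub : Set.Ioo α β ⊆ {t : ℝ | 0 < P (A t)} ∪ {0} := by
      intro t ht
      by_cases ht0 : t = 0
      · exact Or.inr (by simp [ht0])
      · exact Or.inl (pos_iff_ne_zero.mpr (hcon t ht ht0))
    have hnull : (volume : Measure ℝ) ({t : ℝ | 0 < P (A t)} ∪ {0}) = 0 :=
      (hcount.union (Set.countable_singleton 0)).measure_zero volume
    have := measure_mono_null hsub hnull
    rw [Real.volume_Ioo] at this
    rw [ENNReal.ofReal_eq_zero] at this
    linarith
  obtain ⟨t, htIoo, ht0, hz⟩ := hex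
  refine ⟨t, htIoo, ht0, fun h hK => ?_⟩
  by_cases hint : Integrable (fun ω => (ustar ω + t * (u ω - ustar ω)) * h ω) P
  · obtain ⟨C, hC⟩ := hbdd h hK
    have hA0 : ∀ᵐ ω ∂P, ω ∉ A t := by
      rw [← measure_eq_zero_iff_ae_notMem] at *
      exact hz
    have hm : AEStronglyMeasurable (fun ω => ustar ω * h ω) P := by
      have hΨmeas : Measurable fun ω => U ω / (U ω + t * (V ω - U ω)) :=
        hUsm.measurable.div
          (hUsm.measurable.add ((hVsm.measurable.sub hUsm.measurable).const_mul t))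
      have hmsm : AEStronglyMeasurable
          (fun ω => (U ω / (U ω + t * (V ω - U ω)))
            * ((ustar ω + t * (u ω - ustar ω)) * h ω)) P :=
        (hΨmeas.aestronglyMeasurable).mul hint.1
      refine hmsm.congr ?_
      filter_upwards [hUeq, hVeq, hA0] with ω h1 h2 h3
      by_cases hΨ : U ω + t * (V ω - U ω) = 0
      · have hU0 : U ω = 0 := by
          by_contra hU0
          exact h3 ⟨hΨ, hU0⟩
        have hust0 : ustar ω = 0 := h1.trans hU0
        simp [hU0, hust0]
      · have hψ : ustar ω + t * (u ω - ustar ω) = U ω + t * (V ω - U ω) := by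
          rw [h1, h2]
        rw [hψ, h1]
        field_simp
    have hint_star : Integrable (fun ω => ustar ω * h ω) P := by
      refine Integrable.mono' (hustar_int.abs.mul_const C) hm ?_
      filter_upwards [hC] with ω hCω
      rw [Real.norm_eq_abs, abs_mul]
      exact mul_le_mul_of_nonneg_left hCω (abs_nonneg _)
    have hint_u : Integrable (fun ω => u ω * h ω) P := by
      have heq : (fun ω => u ω * h ω) = fun ω =>
          (1/t) * ((ustar ω + t * (u ω - ustar ω)) * h ω) - ((1-t)/t) * (ustar ω * h ω) := by
        funext ω
        field_simp
        ring
      rw [heq]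
      exact (hint.const_mul _).sub (hint_star.const_mul _)
    have heq2 : (fun ω => (ustar ω + t * (u ω - ustar ω)) * h ω) = fun ω =>
        (1 - t) * (ustar ω * h ω) + t * (u ω * h ω) := by
      funext ω; ring
    rw [heq2, integral_add (hint_star.const_mul _) (hint_u.const_mul _),
      integral_const_mul, integral_const_mul, hstar_ann h hK, hu_ann h hK]
    ring
  · exact integral_undef hint

end QOpt


section MainProof

open MeasureTheory ENNReal Filter Real Set QOpt

/-- Necessity: if `u* = g*/E[g*]` is the `q`-optimal signed martingale density, where
`g* = sgn(1-f)|1-f|^{p-1}` and `f` minimizes `‖1-·‖_p` over the closure of `K₀`, then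
`E[u ⬝ sgn(g*)|g*|^{q-1}] = 1` for every signed martingale density `u ∈ L^q`. -/
theorem qoptimal_necessary_condition
    {Ω : Type*} [MeasurableSpace Ω] (P : Measure Ω) [IsProbabilityMeasure P]
    (q p : ℝ) (hq : 1 < q) (hp : p = q / (q - 1))
    (K₀ : Submodule ℝ (Ω → ℝ))
    (hbdd : ∀ h ∈ K₀, ∃ C : ℝ, ∀ᵐ ω ∂P, |h ω| ≤ C)
    (f : Ω → ℝ) (hfcl : InLpClosure P K₀ p f)
    (hfmin : ∀ f' : Ω → ℝ, InLpClosure P K₀ p f' →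
      eLpNorm (fun ω => 1 - f ω) (ENNReal.ofReal p) P ≤
        eLpNorm (fun ω => 1 - f' ω) (ENNReal.ofReal p) P)
    (gstar : Ω → ℝ)
    (hgstar : gstar = fun ω => Real.sign (1 - f ω) * |1 - f ω| ^ (p - 1))
    (ustar : Ω → ℝ)
    (hustar : ustar = fun ω => gstar ω / ∫ ω', gstar ω' ∂P)
    (hopt : IsSignedMMDensity P K₀ ustar ∧ MemLp ustar (ENNReal.ofReal q) P ∧
      ∀ u : Ω → ℝ, IsSignedMMDensity P K₀ u → MemLp u (ENNReal.ofReal q) P →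
        eLpNorm ustar (ENNReal.ofReal q) P ≤ eLpNorm u (ENNReal.ofReal q) P) :
    ∀ u : Ω → ℝ, IsSignedMMDensity P K₀ u → MemLp u (ENNReal.ofReal q) P →
      ∫ ω, u ω * (Real.sign (gstar ω) * |gstar ω| ^ (q - 1)) ∂P = 1 := by
  obtain ⟨⟨hustar_int, hustar_ann, hustar_mean⟩, hustar_mem, hopt_min⟩ := hopt
  intro u hu_den hu_mem
  obtain ⟨hu_int, hu_ann, hu_mean⟩ := hu_den
  have hsub_int : Integrable (fun ω => u ω - ustar ω) P := hu_int.sub hustar_int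
  have hsub_mem : MemLp (fun ω => u ω - ustar ω) (ENNReal.ofReal q) P :=
    hu_mem.sub hustar_mem
  -- basic exponent facts
  have hq1 : (0:ℝ) < q - 1 := by linarith
  have hq0 : (0:ℝ) < q := by linarith
  have hp1 : 1 < p := by
    rw [hp, lt_div_iff₀ (by linarith)]; linarith
  have hp0 : (0:ℝ) < p := by linarith
  have hpm1 : (0:ℝ) < p - 1 := by linarith
  have hpq1 : (p - 1) * (q - 1) = 1 := by
    rw [hp]; field_simp; ring
  have hq_eq : q = p / (p - 1) := by
    have h1 : p - 1 = 1 / (q - 1) := by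
      rw [hp]; field_simp; ring
    rw [h1, div_div_eq_mul_div, div_one, hp,
      div_mul_cancel₀ _ (by intro hcon; rw [sub_eq_zero] at hcon; rw [← hcon] at hq; linarith : q - 1 ≠ 0)]
  -- the normalizing constant
  set c := ∫ ω', gstar ω' ∂P with hc_def
  have hc0 : c ≠ 0 := by
    intro hc
    rw [hustar, hc] at hustar_mean
    simp at hustar_mean
  have hgu : ∀ ω, gstar ω = c * ustar ω := by
    intro ω; rw [hustar]; field_simp
  have hgstar_mem : MemLp gstar (ENNReal.ofReal q) P := by
    have h1 := hustar_mem.const_mul c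
    have h2 : (fun ω => c * ustar ω) = gstar := funext fun ω => (hgu ω).symm
    rwa [h2] at h1
  have hgstar_int : Integrable gstar P := by
    have h1 := hustar_int.const_mul c
    have h2 : (fun ω => c * ustar ω) = gstar := funext fun ω => (hgu ω).symm
    rwa [h2] at h1
  set F : Ω → ℝ := fun ω => 1 - f ω with hF_def
  have hgF : ∀ ω, gstar ω = G (p-1) (F ω) := by
    intro ω; rw [hgstar]; rfl
  have hFg : ∀ ω, G (q-1) (gstar ω) = F ω := by
    intro ω; rw [hgF ω]; exact G_involution hp1 hpq1
  have hF_aesm : AEStronglyMeasurable F P := by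
    have h1 : F = fun ω => G (q-1) (gstar ω) := funext fun ω => (hFg ω).symm
    rw [h1]
    exact ((G_measurable hq1).comp_aemeasurable
      hgstar_mem.1.aemeasurable).aestronglyMeasurable
  have hzero_cl : InLpClosure P K₀ p (fun _ => (0:ℝ)) := by
    intro ε hε
    refine ⟨0, K₀.zero_mem, ?_⟩
    have : (fun ω => (fun _ => (0:ℝ)) ω - (0 : Ω → ℝ) ω) = (0 : Ω → ℝ) := by
      funext ω; simp
    rw [this, eLpNorm_zero]
    exact ENNReal.ofReal_pos.mpr hε
  have hF_mem : MemLp F (ENNReal.ofReal p) P := by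
    refine ⟨hF_aesm, ?_⟩
    have h1 := hfmin (fun _ => (0:ℝ)) hzero_cl
    have h2 : (fun ω : Ω => 1 - (fun _ => (0:ℝ)) ω) = fun _ : Ω => (1:ℝ) := by
      funext ω; simp
    rw [h2] at h1
    exact lt_of_le_of_lt h1 (memLp_const (1:ℝ)).2
  have hf_mem : MemLp f (ENNReal.ofReal p) P := by
    have h1 : f = fun ω => 1 - F ω := by
      funext ω; rw [hF_def]; ring
    rw [h1]
    exact (memLp_const (1:ℝ)).sub hF_mem
  -- Lp-versions with the conjugate exponent written as q/(q-1)
  have hpq_of : ENNReal.ofReal (q / (q-1)) = ENNReal.ofReal p := by rw [← hp]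
  have hqp_of : ENNReal.ofReal (p / (p-1)) = ENNReal.ofReal q := by rw [← hq_eq]
  -- closure is stable under scaling f
  have hscale : ∀ k : ℝ, InLpClosure P K₀ p (fun ω => k * f ω) := by
    intro k ε hε
    by_cases hk : k = 0
    · refine ⟨0, K₀.zero_mem, ?_⟩
      have : (fun ω => (fun ω' => k * f ω') ω - (0 : Ω → ℝ) ω) = (0 : Ω → ℝ) := by
        funext ω; simp [hk]
      rw [this, eLpNorm_zero]
      exact ENNReal.ofReal_pos.mpr hε
    · obtain ⟨h, hhK, hh⟩ := hfcl (ε / |k|) (by positivity)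
      refine ⟨k • h, K₀.smul_mem k hhK, ?_⟩
      have heq : (fun ω => (fun ω' => k * f ω') ω - (k • h) ω)
          = k • (fun ω => f ω - h ω) := by
        funext ω
        simp only [Pi.smul_apply, smul_eq_mul]
        ring
      rw [heq, eLpNorm_const_smul]
      have hk1 : ‖k‖ₑ = ENNReal.ofReal |k| := by
        rw [← ofReal_norm, Real.norm_eq_abs]
      have habs : (0:ℝ) < |k| := abs_pos.mpr hk
      have h3 : ENNReal.ofReal |k| * eLpNorm (fun ω => f ω - h ω) (ENNReal.ofReal p) P
          < ENNReal.ofReal |k| * ENNReal.ofReal (ε / |k|) := by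
        exact ENNReal.mul_lt_mul_right (ENNReal.ofReal_pos.mpr habs).ne' ofReal_ne_top hh
      have h4 : ENNReal.ofReal |k| * ENNReal.ofReal (ε / |k|) = ENNReal.ofReal ε := by
        rw [← ENNReal.ofReal_mul habs.le, mul_div_cancel₀ _ habs.ne']
      calc ‖k‖ₑ * eLpNorm (fun ω => f ω - h ω) (ENNReal.ofReal p) P
          = ENNReal.ofReal |k| * eLpNorm (fun ω => f ω - h ω) (ENNReal.ofReal p) P := by
            rw [hk1]
        _ < ENNReal.ofReal |k| * ENNReal.ofReal (ε / |k|) := h3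
        _ = ENNReal.ofReal ε := h4
  -- Step 3 : ∫ gstar f = 0 via the minimality of f
  have hminf : ∀ k : ℝ, k ≠ 0 → ∫ ω, |F ω| ^ p ∂P ≤ ∫ ω, |1 - k * f ω| ^ p ∂P := by
    intro k hk
    have h1 := hfmin (fun ω => k * f ω) (hscale k)
    have h2 : MemLp (fun ω => 1 - k * f ω) (ENNReal.ofReal p) P :=
      (memLp_const (1:ℝ)).sub (hf_mem.const_mul k)
    exact integral_rpow_le_of_eLpNorm_le hp0 hF_mem h2 h1
  have hTp : ∀ n : ℕ, (0:ℝ) < 1/(n+2) ∧ (1:ℝ)/(n+2) ≤ 1 := by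
    intro n
    constructor
    · positivity
    · rw [div_le_one (by positivity)]
      have : (0:ℝ) ≤ (n:ℝ) := Nat.cast_nonneg n
      linarith
  have hTtend : Tendsto (fun n : ℕ => (1:ℝ)/(n+2)) atTop (nhds 0) := by
    have h1 : Tendsto (fun n : ℕ => (1:ℝ)/(n+1)) atTop (nhds 0) :=
      tendsto_one_div_add_atTop_nhds_zero_nat
    apply squeeze_zero (fun n => by positivity) (fun n => ?_) h1
    apply div_le_div_of_nonneg_left (by norm_num) (by positivity)
    linarith
  have hvar_p_pos : 0 ≤ ∫ ω, G (p-1) (F ω) * f ω ∂P := by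
    apply var_ineq hp1 hF_mem hf_mem (fun n => (hTp n).1) (fun n => (hTp n).2) hTtend
    intro n
    have h1 := hminf (1 - 1/(n+2)) (by
      have := (hTp n).1
      have h2 : (1:ℝ)/(n+2) < 1 := by
        rw [div_lt_one (by positivity)]
        have : (0:ℝ) ≤ (n:ℝ) := Nat.cast_nonneg n
        linarith
      intro hcon
      nlinarith)
    have h2 : (fun ω => |1 - (1 - 1/(n+2:ℝ)) * f ω| ^ p)
        = fun ω => |F ω + (1/(n+2:ℝ)) * f ω| ^ p := by
      funext ω
      have h3 : 1 - (1 - 1/(n+2:ℝ)) * f ω = F ω + (1/(n+2:ℝ)) * f ω := by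
        rw [hF_def]; ring
      rw [h3]
    rwa [h2] at h1
  have hvar_p_neg : 0 ≤ ∫ ω, G (p-1) (F ω) * (-f ω) ∂P := by
    apply var_ineq hp1 hF_mem hf_mem.neg (fun n => (hTp n).1) (fun n => (hTp n).2) hTtend
    intro n
    have h1 := hminf (1 + 1/(n+2)) (by positivity)
    have h2 : (fun ω => |1 - (1 + 1/(n+2:ℝ)) * f ω| ^ p)
        = fun ω => |F ω + (1/(n+2:ℝ)) * -f ω| ^ p := by
      funext ω
      have h3 : 1 - (1 + 1/(n+2:ℝ)) * f ω = F ω + (1/(n+2:ℝ)) * -f ω := by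
        rw [hF_def]; ring
      rw [h3]
    rwa [h2] at h1
  have hgf0 : ∫ ω, gstar ω * f ω ∂P = 0 := by
    have hGF : (fun ω => G (p-1) (F ω) * f ω) = fun ω => gstar ω * f ω :=
      funext fun ω => by rw [hgF ω]
    rw [hGF] at hvar_p_pos
    have hneg : (fun ω => G (p-1) (F ω) * (-f ω)) = fun ω => -(gstar ω * f ω) :=
      funext fun ω => by rw [hgF ω]; ring
    rw [hneg, integral_neg] at hvar_p_neg
    linarith
  -- basic integrabilities
  have hF_memq : MemLp F (ENNReal.ofReal (q/(q-1))) P := by rw [hpq_of]; exact hF_mem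
  have hf_memq : MemLp f (ENNReal.ofReal (q/(q-1))) P := by rw [hpq_of]; exact hf_mem
  have hint_gstarf : Integrable (fun ω => gstar ω * f ω) P :=
    integrable_mul_conj hq hgstar_mem hf_memq
  have hint_gstarF : Integrable (fun ω => gstar ω * F ω) P :=
    integrable_mul_conj hq hgstar_mem hF_memq
  have hint_ustarF : Integrable (fun ω => ustar ω * F ω) P :=
    integrable_mul_conj hq hustar_mem hF_memq
  have hgF_int : ∫ ω, gstar ω * F ω ∂P = c := by
    have h1 : (fun ω => gstar ω * F ω) = fun ω => gstar ω - gstar ω * f ω := by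
      funext ω; rw [hF_def]; ring
    rw [h1, integral_sub hgstar_int hint_gstarf, hgf0, ← hc_def, sub_zero]
  have hcpos : 0 < c := by
    rcases lt_trichotomy 0 c with h | h | h
    · exact h
    · exact absurd h.symm hc0
    · exfalso
      have h1 : (fun ω => gstar ω * F ω) = fun ω => |F ω| ^ p := by
        funext ω
        rw [hgF ω, G_mul_self hpm1, sub_add_cancel]
      have h2 : 0 ≤ ∫ ω, gstar ω * F ω ∂P := by
        rw [h1]
        exact integral_nonneg fun ω => by positivity
      rw [hgF_int] at h2
      linarith
  have hustarF : ∫ ω, ustar ω * F ω ∂P = 1 := by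
    have h1 : (fun ω => ustar ω * F ω) = fun ω => (1/c) * (gstar ω * F ω) := by
      funext ω
      rw [hgu ω]
      field_simp
    rw [h1, integral_const_mul, hgF_int, one_div, inv_mul_cancel₀ hc0]
  -- Step 4 : variational argument in L^q using the optimality of ustar
  have hb_mem : MemLp (fun ω => u ω - ustar ω) (ENNReal.ofReal q) P :=
    hu_mem.sub hustar_mem
  have hb_mem' : MemLp (fun ω => ustar ω - u ω) (ENNReal.ofReal q) P :=
    hustar_mem.sub hu_mem
  have hgood : ∀ a b : ℝ, a < b → ∃ t, t ∈ Set.Ioo a b ∧ t ≠ 0 ∧ ∀ h ∈ K₀,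
      ∫ ω, (ustar ω + t * (u ω - ustar ω)) * h ω ∂P = 0 :=
    fun a b hab => exists_good_t K₀ hbdd hustar_int hu_int hustar_ann hu_ann hab
  have hdens : ∀ t : ℝ, (∀ h ∈ K₀, ∫ ω, (ustar ω + t * (u ω - ustar ω)) * h ω ∂P = 0) →
      ∫ ω, |ustar ω| ^ q ∂P ≤ ∫ ω, |ustar ω + t * (u ω - ustar ω)| ^ q ∂P := by
    intro t hann
    have hint : Integrable (fun ω => ustar ω + t * (u ω - ustar ω)) P :=
      hustar_int.add (hsub_int.const_mul t)
    have hmem : MemLp (fun ω => ustar ω + t * (u ω - ustar ω)) (ENNReal.ofReal q) P :=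
      hustar_mem.add (hsub_mem.const_mul t)
    have hmean : ∫ ω, (ustar ω + t * (u ω - ustar ω)) ∂P = 1 := by
      rw [integral_add hustar_int (hsub_int.const_mul t),
        integral_const_mul, integral_sub hu_int hustar_int, hu_mean, hustar_mean]
      ring
    have hle := hopt_min _ ⟨hint, hann, hmean⟩ hmem
    exact integral_rpow_le_of_eLpNorm_le hq0 hustar_mem hmem hle
  -- positive-side sequence
  have hex_pos : ∀ n : ℕ, ∃ t : ℝ, t ∈ Set.Ioo 0 (min 1 (1/(n+1:ℝ))) ∧ t ≠ 0 ∧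
      ∀ h ∈ K₀, ∫ ω, (ustar ω + t * (u ω - ustar ω)) * h ω ∂P = 0 := by
    intro n
    apply hgood
    have h1 : (0:ℝ) < 1/(n+1:ℝ) := by positivity
    exact lt_min one_pos h1
  choose Tp hTpIoo hTpne hTpgood using hex_pos
  have hTp0 : ∀ n, 0 < Tp n := fun n => (hTpIoo n).1
  have hTp1 : ∀ n, Tp n ≤ 1 := fun n => ((hTpIoo n).2.le.trans (min_le_left _ _))
  have hTptend : Tendsto Tp atTop (nhds 0) := by
    apply squeeze_zero (fun n => (hTp0 n).le)
      (fun n => ((hTpIoo n).2.le.trans (min_le_right _ _)))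
      tendsto_one_div_add_atTop_nhds_zero_nat
  have hvar_q_pos : 0 ≤ ∫ ω, G (q-1) (ustar ω) * (u ω - ustar ω) ∂P := by
    apply var_ineq hq hustar_mem hb_mem hTp0 hTp1 hTptend
    intro n
    exact hdens (Tp n) (hTpgood n)
  -- negative-side sequence
  have hex_neg : ∀ n : ℕ, ∃ t : ℝ, t ∈ Set.Ioo (-(min 1 (1/(n+1:ℝ)))) 0 ∧ t ≠ 0 ∧
      ∀ h ∈ K₀, ∫ ω, (ustar ω + t * (u ω - ustar ω)) * h ω ∂P = 0 := by
    intro n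
    apply hgood
    have h1 : (0:ℝ) < 1/(n+1:ℝ) := by positivity
    have := lt_min one_pos h1
    linarith
  choose Tm hTmIoo hTmne hTmgood using hex_neg
  have hvar_q_neg : 0 ≤ ∫ ω, G (q-1) (ustar ω) * (ustar ω - u ω) ∂P := by
    apply var_ineq hq hustar_mem hb_mem' (T := fun n => -(Tm n))
      (fun n => by
        have h := (hTmIoo n).2
        show (0:ℝ) < -(Tm n)
        linarith)
      (fun n => by
        have h := (hTmIoo n).1
        have h2 : min 1 (1/(n+1:ℝ)) ≤ 1 := min_le_left _ _
        show -(Tm n) ≤ 1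
        linarith)
      (by
        apply squeeze_zero (f := fun n => -(Tm n)) (g := fun n => 1/(n+1:ℝ))
          (fun n => by
            have h := (hTmIoo n).2
            show (0:ℝ) ≤ -(Tm n)
            linarith)
          (fun n => by
            have h1 := (hTmIoo n).1
            have h3 : min 1 (1/(n+1:ℝ)) ≤ 1/(n+1:ℝ) := min_le_right _ _
            show -(Tm n) ≤ 1/(n+1:ℝ)
            linarith)
          tendsto_one_div_add_atTop_nhds_zero_nat)
    intro n
    have h2 : (fun ω => |ustar ω + -Tm n * (ustar ω - u ω)| ^ q)
        = fun ω => |ustar ω + Tm n * (u ω - ustar ω)| ^ q := by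
      funext ω
      have h3 : ustar ω + -Tm n * (ustar ω - u ω) = ustar ω + Tm n * (u ω - ustar ω) := by
        ring
      rw [h3]
    calc ∫ ω, |ustar ω| ^ q ∂P
        ≤ ∫ ω, |ustar ω + Tm n * (u ω - ustar ω)| ^ q ∂P := hdens (Tm n) (hTmgood n)
      _ = ∫ ω, |ustar ω + -Tm n * (ustar ω - u ω)| ^ q ∂P := by rw [h2]
  have hGb0 : ∫ ω, G (q-1) (ustar ω) * (u ω - ustar ω) ∂P = 0 := by
    have h1 : (fun ω => G (q-1) (ustar ω) * (ustar ω - u ω))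
        = fun ω => -(G (q-1) (ustar ω) * (u ω - ustar ω)) := by
      funext ω; ring
    rw [h1, integral_neg] at hvar_q_neg
    linarith
  -- final computation
  have hgoal_eq : (fun ω => u ω * (Real.sign (gstar ω) * |gstar ω| ^ (q - 1)))
      = fun ω => u ω * F ω := by
    funext ω
    have : Real.sign (gstar ω) * |gstar ω| ^ (q - 1) = G (q-1) (gstar ω) := rfl
    rw [this, hFg ω]
  rw [hgoal_eq]
  have hint_bF : Integrable (fun ω => (u ω - ustar ω) * F ω) P :=
    integrable_mul_conj hq hb_mem hF_memq
  have hsplit : (fun ω => u ω * F ω)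
      = fun ω => ustar ω * F ω + (u ω - ustar ω) * F ω := by
    funext ω; ring
  rw [hsplit, integral_add hint_ustarF hint_bF, hustarF]
  have hbF : (fun ω => (u ω - ustar ω) * F ω)
      = fun ω => c ^ (q-1) * (G (q-1) (ustar ω) * (u ω - ustar ω)) := by
    funext ω
    rw [← hFg ω, hgu ω, G_const_mul hcpos]
    ring
  rw [hbF, integral_const_mul, hGb0, mul_zero, add_zero]

end MainProof
end

section
/- Let q > 1 and g* ∈ L^q(P) with u* := g*/E[g*] ∈ M^s ∩ L^q(P) (in particular E[g*] ≠ 0). If E[u · sgn(g*)|g*|^{q-1}] = 1 for every u ∈ M^s ∩ L^q(P), then u* is the q-optimal measure density, i.e. ‖u*‖_q ≤ ‖u‖_q for all u ∈ M^s ∩ L^q(P). -/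
open MeasureTheory ENNReal

lemma measurable_real_sign : Measurable Real.sign := by
  have : Real.sign = fun r : ℝ => if r < 0 then (-1 : ℝ) else if 0 < r then 1 else 0 :=
    funext fun r => rfl
  rw [this]
  exact Measurable.ite (measurableSet_lt measurable_id measurable_const) measurable_const
    (Measurable.ite (measurableSet_lt measurable_const measurable_id) measurable_const
      measurable_const)

lemma nonneg_mul_rpow {y q : ℝ} (hy : 0 ≤ y) (hq : 1 < q) : y * y ^ (q - 1) = y ^ q := by
  have h : y ^ (1 + (q - 1)) = y * y ^ (q - 1) := by
    rw [Real.rpow_add' hy (by linarith), Real.rpow_one]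
  rw [← h]; norm_num

lemma mul_sign_abs_rpow (x : ℝ) {q : ℝ} (hq : 1 < q) :
    x * (Real.sign x * |x| ^ (q - 1)) = |x| ^ q := by
  rcases lt_trichotomy x 0 with h | h | h
  · rw [Real.sign_of_neg h, abs_of_neg h, ← nonneg_mul_rpow (neg_nonneg.2 h.le) hq]; ring
  · simp [h, Real.zero_rpow (by linarith : q ≠ 0)]
  · rw [Real.sign_of_pos h, abs_of_pos h, ← nonneg_mul_rpow h.le hq]; ring

/-- Sufficiency: if `E[u ⬝ sgn(g*)|g*|^{q-1}] = 1` for every signed martingale density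
`u ∈ L^q`, then `u* = g*/E[g*]` is the `q`-optimal density. -/
theorem qoptimal_sufficient_condition
    {Ω : Type*} [MeasurableSpace Ω] (P : Measure Ω) [IsProbabilityMeasure P]
    (q p : ℝ) (hq : 1 < q) (hp : p = q / (q - 1))
    (K₀ : Submodule ℝ (Ω → ℝ))
    (gstar : Ω → ℝ) (hgq : MemLp gstar (ENNReal.ofReal q) P)
    (hEne : ∫ ω, gstar ω ∂P ≠ 0)
    (ustar : Ω → ℝ)
    (hustar : ustar = fun ω => gstar ω / ∫ ω', gstar ω' ∂P)
    (hustarMs : IsSignedMMDensity P K₀ ustar)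
    (hustarLq : MemLp ustar (ENNReal.ofReal q) P)
    (hcond : ∀ u : Ω → ℝ, IsSignedMMDensity P K₀ u → MemLp u (ENNReal.ofReal q) P →
      ∫ ω, u ω * (Real.sign (gstar ω) * |gstar ω| ^ (q - 1)) ∂P = 1) :
    ∀ u : Ω → ℝ, IsSignedMMDensity P K₀ u → MemLp u (ENNReal.ofReal q) P →
      eLpNorm ustar (ENNReal.ofReal q) P ≤ eLpNorm u (ENNReal.ofReal q) P := by
  intro u huMs huLq
  have hq0 : (0 : ℝ) < q := by linarith
  have hq1 : (0 : ℝ) < q - 1 := by linarith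
  have hp_pos : 0 < p := by rw [hp]; positivity
  have hpq : q.HolderConjugate p := by
    rw [hp]; exact Real.HolderConjugate.conjExponent hq
  set μ₀ : ℝ := ∫ ω, gstar ω ∂P with hμ₀
  set f : Ω → ℝ := fun ω => Real.sign (gstar ω) * |gstar ω| ^ (q - 1) with hf
  -- norm of f
  have hfabs : ∀ ω, ‖f ω‖ = |gstar ω| ^ (q - 1) := by
    intro ω
    rcases lt_trichotomy (gstar ω) 0 with h | h | h
    · simp [hf, Real.sign_of_neg h, abs_mul, abs_of_nonneg (Real.rpow_nonneg (abs_nonneg _) _),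
        Real.norm_eq_abs]
    · simp [hf, h, Real.zero_rpow (ne_of_gt hq1)]
    · simp [hf, Real.sign_of_pos h, abs_mul, abs_of_nonneg (Real.rpow_nonneg (abs_nonneg _) _),
        Real.norm_eq_abs]
  -- f is in L^p
  have hfm : AEStronglyMeasurable f P := by
    have hg : AEMeasurable gstar P := hgq.1.aemeasurable
    exact ((measurable_real_sign.comp_aemeasurable hg).mul
      ((measurable_abs.comp_aemeasurable hg).pow aemeasurable_const)).aestronglyMeasurable
  have hfLp : MemLp f (ENNReal.ofReal p) P := by
    have h1 := hgq.norm_rpow_div (ENNReal.ofReal (q - 1))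
    have heq : ENNReal.ofReal q / ENNReal.ofReal (q - 1) = ENNReal.ofReal p := by
      rw [hp, ENNReal.ofReal_div_of_pos hq1]
    rw [heq, ENNReal.toReal_ofReal hq1.le] at h1
    refine h1.of_le hfm (Filter.Eventually.of_forall fun ω => ?_)
    rw [hfabs ω, Real.norm_eq_abs, Real.norm_eq_abs,
      abs_of_nonneg (Real.rpow_nonneg (abs_nonneg _) _)]
  -- ∫ ‖f‖^p = ∫ ‖g‖^q
  set M : ℝ := ∫ ω, ‖gstar ω‖ ^ q ∂P with hM
  have hfp : ∫ ω, ‖f ω‖ ^ p ∂P = M := by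
    refine integral_congr_ae (Filter.Eventually.of_forall fun ω => ?_)
    show ‖f ω‖ ^ p = ‖gstar ω‖ ^ q
    rw [hfabs ω, ← Real.rpow_mul (abs_nonneg _)]
    have : (q - 1) * p = q := by rw [hp]; field_simp
    rw [this, Real.norm_eq_abs]
  -- M = μ₀ via the condition applied to u*
  have hMμ : M = μ₀ := by
    have h1 := hcond ustar hustarMs hustarLq
    have h2 : ∫ ω, ustar ω * (Real.sign (gstar ω) * |gstar ω| ^ (q - 1)) ∂P
        = μ₀⁻¹ * ∫ ω, gstar ω * (Real.sign (gstar ω) * |gstar ω| ^ (q - 1)) ∂P := by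
      rw [hustar, ← integral_const_mul]
      congr 1; funext ω
      show gstar ω / μ₀ * (Real.sign (gstar ω) * |gstar ω| ^ (q - 1)) = _
      rw [div_eq_inv_mul]; ring
    have h3 : ∫ ω, gstar ω * (Real.sign (gstar ω) * |gstar ω| ^ (q - 1)) ∂P = M := by
      refine integral_congr_ae (Filter.Eventually.of_forall fun ω => ?_)
      show gstar ω * (Real.sign (gstar ω) * |gstar ω| ^ (q - 1)) = ‖gstar ω‖ ^ q
      rw [mul_sign_abs_rpow _ hq, Real.norm_eq_abs]
    rw [h2, h3] at h1
    field_simp at h1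
    linarith
  have hM_nonneg : 0 ≤ M :=
    integral_nonneg fun ω => Real.rpow_nonneg (norm_nonneg _) _
  have hμ₀pos : 0 < μ₀ := lt_of_le_of_ne (hMμ ▸ hM_nonneg) (Ne.symm hEne)
  have hMpos : 0 < M := hMμ ▸ hμ₀pos
  -- Hölder applied to u and f
  set A : ℝ := ∫ ω, ‖u ω‖ ^ q ∂P with hA
  have hA_nonneg : 0 ≤ A := integral_nonneg fun ω => Real.rpow_nonneg (norm_nonneg _) _
  have hholder : (1 : ℝ) ≤ A ^ (1 / q) * M ^ (1 / p) := by
    have h1 := hcond u huMs huLq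
    have h2 : (1 : ℝ) ≤ ∫ ω, ‖u ω‖ * ‖f ω‖ ∂P := by
      calc (1 : ℝ) = ‖∫ ω, u ω * f ω ∂P‖ := by rw [h1]; simp
        _ ≤ ∫ ω, ‖u ω * f ω‖ ∂P := norm_integral_le_integral_norm _
        _ = ∫ ω, ‖u ω‖ * ‖f ω‖ ∂P := by simp [norm_mul]
    have h3 := integral_mul_norm_le_Lp_mul_Lq hpq huLq hfLp
    rw [hfp] at h3
    exact h2.trans h3
  -- deduce μ₀ ^ (1 - q) ≤ A
  have hBA : μ₀ ^ (1 - q) ≤ A := by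
    have hMp_pos : 0 < M ^ (1 / p) := Real.rpow_pos_of_pos hMpos _
    have h1 : M ^ (-(1 / p)) ≤ A ^ (1 / q) := by
      rw [Real.rpow_neg hMpos.le]
      rw [inv_le_iff_one_le_mul₀' hMp_pos]
      calc (1:ℝ) ≤ A ^ (1 / q) * M ^ (1 / p) := hholder
        _ = M ^ (1 / p) * A ^ (1 / q) := by ring
    have h2 : (M ^ (-(1 / p))) ^ q ≤ (A ^ (1 / q)) ^ q :=
      Real.rpow_le_rpow (Real.rpow_nonneg hMpos.le _) h1 hq0.le
    rw [← Real.rpow_mul hMpos.le, ← Real.rpow_mul hA_nonneg] at h2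
    have hexp : -(1 / p) * q = 1 - q := by
      rw [hp]; field_simp; ring
    have hexp2 : 1 / q * q = 1 := by field_simp
    rw [hexp, hexp2, Real.rpow_one] at h2
    rwa [← hMμ]
  -- compute ∫ ‖u*‖^q = μ₀ ^ (1 - q)
  have hBcomp : ∫ ω, ‖ustar ω‖ ^ q ∂P = μ₀ ^ (1 - q) := by
    have h1 : ∀ ω, ‖ustar ω‖ ^ q = ‖gstar ω‖ ^ q / μ₀ ^ q := by
      intro ω
      rw [hustar]
      simp only [Real.norm_eq_abs, abs_div, abs_of_pos hμ₀pos]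
      exact Real.div_rpow (abs_nonneg _) hμ₀pos.le q
    rw [integral_congr_ae (Filter.Eventually.of_forall fun ω => h1 ω)]
    simp only [div_eq_mul_inv]
    rw [integral_mul_const, ← hM, hMμ, Real.rpow_sub hμ₀pos, Real.rpow_one, div_eq_mul_inv]
  -- conclude
  have hqne : ENNReal.ofReal q ≠ 0 := by
    simp [ENNReal.ofReal_eq_zero, not_le, hq0]
  rw [hustarLq.eLpNorm_eq_integral_rpow_norm hqne ENNReal.ofReal_ne_top,
    huLq.eLpNorm_eq_integral_rpow_norm hqne ENNReal.ofReal_ne_top]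
  apply ENNReal.ofReal_le_ofReal
  rw [ENNReal.toReal_ofReal hq0.le]
  apply Real.rpow_le_rpow (integral_nonneg fun ω => Real.rpow_nonneg (norm_nonneg _) _)
  · rw [hBcomp]; exact hBA
  · positivity
end

section
/- Stopped-path improvement: let p > 1, let G be a continuous adapted process with G_0 = 0, let τ = inf{t ≥ 0 : G_t > 1}, and suppose P(G_∞ > 1 + ε/2) ≥ ε/2 for some ε ∈ (0,1). Then ‖1 - G_∞‖_p^p ≥ ‖1 - G_τ‖_p^p + (ε/2)^{p+1}, where G_τ := G_∞ on {τ = ∞}. -/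
open MeasureTheory ENNReal

/-- Stopped-path improvement: for a continuous process `G` with `G_0 = 0`,
`τ = inf{t : G_t > 1}` and `P(G_∞ > 1 + ε/2) ≥ ε/2`, one has
`‖1 - G_∞‖_p^p ≥ ‖1 - G_τ‖_p^p + (ε/2)^{p+1}`. -/
theorem stopped_path_improvement
    {Ω : Type*} [MeasurableSpace Ω] (P : Measure Ω) [IsProbabilityMeasure P]
    (p : ℝ) (hp : 1 < p) (ε : ℝ) (hε : ε ∈ Set.Ioo (0 : ℝ) 1)
    (G : ℝ≥0∞ → Ω → ℝ)
    (hGcont : ∀ ω, Continuous fun t => G t ω)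
    (hG0 : ∀ ω, G 0 ω = 0)
    (hprob : ε / 2 ≤ (P {ω | 1 + ε / 2 < G ⊤ ω}).toReal)
    (hintInf : Integrable (fun ω => |1 - G ⊤ ω| ^ p) P)
    (hintτ : Integrable (fun ω => |1 - G (sInf {t : ℝ≥0∞ | 1 < G t ω}) ω| ^ p) P) :
    (∫ ω, |1 - G (sInf {t : ℝ≥0∞ | 1 < G t ω}) ω| ^ p ∂P) + (ε / 2) ^ (p + 1) ≤
      ∫ ω, |1 - G ⊤ ω| ^ p ∂P := by
  obtain ⟨hε0, hε1⟩ := hε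
  set τ : Ω → ℝ≥0∞ := fun ω => sInf {t : ℝ≥0∞ | 1 < G t ω} with hτdef
  -- pointwise dichotomy
  have key : ∀ ω, τ ω = ⊤ ∨ G (τ ω) ω = 1 := by
    intro ω
    by_cases hτ : τ ω = ⊤
    · exact Or.inl hτ
    right
    set S := {t : ℝ≥0∞ | 1 < G t ω} with hS
    have hSne : S.Nonempty := by
      by_contra h
      rw [Set.not_nonempty_iff_eq_empty] at h
      apply hτ
      simp [hτdef, ← hS, h]
    have h1 : 1 ≤ G (τ ω) ω := by
      have hcl : τ ω ∈ closure S := csInf_mem_closure hSne (OrderBot.bddBelow S)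
      have hsub : closure S ⊆ {t | 1 ≤ G t ω} :=
        closure_minimal (fun t (ht : 1 < G t ω) => le_of_lt ht)
          (isClosed_le continuous_const (hGcont ω))
      exact hsub hcl
    have hτ0 : τ ω ≠ 0 := by
      intro h
      rw [h, hG0 ω] at h1
      linarith
    have h2 : G (τ ω) ω ≤ 1 := by
      have hne : (Set.Iio (τ ω)).Nonempty := ⟨0, pos_iff_ne_zero.mpr hτ0⟩
      have hcl : τ ω ∈ closure (Set.Iio (τ ω)) := by
        rw [closure_Iio' hne]; exact Set.self_mem_Iic
      have hsub : Set.Iio (τ ω) ⊆ {t | G t ω ≤ 1} := by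
        intro t ht
        by_contra h
        simp only [Set.mem_setOf_eq, not_le] at h
        have hmem : t ∈ S := h
        have hle : τ ω ≤ t := sInf_le hmem
        exact absurd hle (not_le.mpr ht)
      exact closure_minimal hsub (isClosed_le (hGcont ω) continuous_const) hcl
    linarith
  -- the "bad" set has τ < ⊤
  have hBsub : ∀ ω, 1 + ε / 2 < G ⊤ ω → τ ω ≠ ⊤ := by
    intro ω hω hτ
    have hopen : IsOpen {t : ℝ≥0∞ | 1 < G t ω} :=
      isOpen_lt continuous_const (hGcont ω)
    have hmem : (⊤ : ℝ≥0∞) ∈ {t : ℝ≥0∞ | 1 < G t ω} := by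
      simp only [Set.mem_setOf_eq]; linarith
    have hcl : (⊤ : ℝ≥0∞) ∈ closure (Set.Iio (⊤ : ℝ≥0∞)) := by
      rw [closure_Iio' ⟨0, by simp⟩]; exact Set.self_mem_Iic
    obtain ⟨t, htU, htIio⟩ :=
      (mem_closure_iff.mp hcl) _ hopen hmem
    have : τ ω ≤ t := sInf_le htU
    exact absurd (lt_of_le_of_lt this htIio) (by simp [hτ])
  set f : Ω → ℝ := fun ω => |1 - G ⊤ ω| ^ p - |1 - G (τ ω) ω| ^ p with hf
  have hp0 : (0 : ℝ) < p := by linarith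
  have hfnonneg : ∀ ω, 0 ≤ f ω := by
    intro ω
    rcases key ω with h | h
    · simp [hf, h]
    · have : |1 - G (τ ω) ω| ^ p = 0 := by
        rw [h]; simp [Real.zero_rpow (ne_of_gt hp0)]
      simp only [hf, this, sub_zero]
      exact Real.rpow_nonneg (abs_nonneg _) p
  set c : ℝ := (ε / 2) ^ p with hc
  have hc0 : 0 < c := Real.rpow_pos_of_pos (by linarith) p
  have hB : ∀ ω, 1 + ε / 2 < G ⊤ ω → c ≤ f ω := by
    intro ω hω
    have hτ := hBsub ω hω
    rcases key ω with h | h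
    · exact absurd h hτ
    have h0 : |1 - G (τ ω) ω| ^ p = 0 := by
      rw [h]; simp [Real.zero_rpow (ne_of_gt hp0)]
    have habs : ε / 2 ≤ |1 - G ⊤ ω| := by
      rw [abs_sub_comm, abs_of_nonneg (by linarith)]
      linarith
    have : c ≤ |1 - G ⊤ ω| ^ p :=
      Real.rpow_le_rpow (by linarith) habs (le_of_lt hp0)
    simp only [hf, h0, sub_zero]
    exact this
  have hfint : Integrable f P := hintInf.sub hintτ
  have hmarkov : c * (P {ω | c ≤ f ω}).toReal ≤ ∫ ω, f ω ∂P :=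
    mul_meas_ge_le_integral_of_nonneg (ae_of_all _ hfnonneg) hfint c
  have hsubset : {ω | 1 + ε / 2 < G ⊤ ω} ⊆ {ω | c ≤ f ω} := fun ω hω => hB ω hω
  have hmono : (P {ω | 1 + ε / 2 < G ⊤ ω}).toReal ≤ (P {ω | c ≤ f ω}).toReal :=
    ENNReal.toReal_mono (measure_ne_top _ _) (measure_mono hsubset)
  have hcε : c * (ε / 2) = (ε / 2) ^ (p + 1) := by
    rw [hc, Real.rpow_add (by linarith : (0:ℝ) < ε / 2), Real.rpow_one]
  have hint_eq : ∫ ω, f ω ∂P =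
      (∫ ω, |1 - G ⊤ ω| ^ p ∂P) - ∫ ω, |1 - G (τ ω) ω| ^ p ∂P :=
    integral_sub hintInf hintτ
  have hchain : (ε / 2) ^ (p + 1) ≤ ∫ ω, f ω ∂P := by
    calc (ε / 2) ^ (p + 1) = c * (ε / 2) := hcε.symm
      _ ≤ c * (P {ω | 1 + ε / 2 < G ⊤ ω}).toReal := by
          exact mul_le_mul_of_nonneg_left hprob (le_of_lt hc0)
      _ ≤ c * (P {ω | c ≤ f ω}).toReal := by
          exact mul_le_mul_of_nonneg_left hmono (le_of_lt hc0)
      _ ≤ ∫ ω, f ω ∂P := hmarkov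
  rw [hint_eq] at hchain
  linarith
end
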